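/- Let K be a convex subset of ℝⁿ with positive Gaussian measure, θ a unit vector, and H_θ(K) = {x : ⟨x,θ⟩ ≤ ψ^{-1}(γ(K))} the half-space of the same Gaussian measure. Then ∫_K ⟨x,θ⟩ dγ(x) ≥ ∫_{H_θ(K)} ⟨x,θ⟩ dγ(x), and consequently (∫_K ⟨x,θ⟩ dγ)² ≤ (∫_{H_θ(K)} ⟨x,θ⟩ dγ)². -/

import Mathlib

open MeasureTheory Real Set

/-- The standard Gaussian measure on `ℝⁿ`. -/
noncomputable def stdGaussian (n : ℕ) : Measure (EuclideanSpace ℝ (Fin n)) :=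
  volume.withDensity fun x =>
    ENNReal.ofReal ((2 * π) ^ (-(n : ℝ) / 2) * Real.exp (-‖x‖ ^ 2 / 2))

lemma stdGaussian_finite (n : ℕ) : IsFiniteMeasure (stdGaussian n) := by
  constructor
  rw [stdGaussian, withDensity_apply _ MeasurableSet.univ, Measure.restrict_univ]
  have hint : Integrable (fun x : EuclideanSpace ℝ (Fin n) =>
      (2 * π) ^ (-(n : ℝ) / 2) * Real.exp (-‖x‖ ^ 2 / 2)) := by
    apply Integrable.const_mul
    have : Integrable (fun x : EuclideanSpace ℝ (Fin n) =>
        Real.exp (-(1/2 : ℝ) * ‖x‖ ^ 2)) := by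
      have h := (GaussianFourier.integrable_cexp_neg_mul_sq_norm_add (V := EuclideanSpace ℝ (Fin n))
        (b := (1/2 : ℂ)) (by norm_num) 0 0).norm
      simpa [Complex.norm_exp, ← Complex.ofReal_pow, Complex.ofReal_re] using h
    convert this using 2 with x
    ring_nf
  exact hint.lintegral_lt_top

/-- The general monotone comparison: among all measurable sets of a given measure,
the sub-level set of `f` minimizes `∫ f`. -/
lemma key_lemma {E : Type*} [MeasurableSpace E] (μ : Measure E) [IsFiniteMeasure μ]
    (f : E → ℝ) (K : Set E) (hK : MeasurableSet K) (hS : MeasurableSet {x | f x ≤ c})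
    (hμ : μ {x | f x ≤ c} = μ K)
    (h1 : IntegrableOn f K μ) (h2 : IntegrableOn f {x | f x ≤ c} μ) :
    ∫ x in {x | f x ≤ c}, f x ∂μ ≤ ∫ x in K, f x ∂μ := by
  set S := {x | f x ≤ c} with hSdef
  have hcK : IntegrableOn (fun _ => c) K μ := integrableOn_const (measure_lt_top μ K).ne
  have hcS : IntegrableOn (fun _ => c) S μ := integrableOn_const (measure_lt_top μ S).ne
  -- reduce to f - c
  have hmeasr : (μ K).toReal = (μ S).toReal := by rw [hμ]
  have hgK : IntegrableOn (fun x => f x - c) K μ := h1.sub hcK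
  have hgS : IntegrableOn (fun x => f x - c) S μ := h2.sub hcS
  have hKsplit : ∫ x in K, (f x - c) ∂μ
      = ∫ x in K ∩ S, (f x - c) ∂μ + ∫ x in K \ S, (f x - c) ∂μ :=
    (integral_inter_add_diff hS hgK).symm
  have hSsplit : ∫ x in S, (f x - c) ∂μ
      = ∫ x in K ∩ S, (f x - c) ∂μ + ∫ x in S \ K, (f x - c) ∂μ := by
    rw [← integral_inter_add_diff hK hgS, inter_comm]
  have hpos : (0:ℝ) ≤ ∫ x in K \ S, (f x - c) ∂μ := by
    apply setIntegral_nonneg (hK.diff hS)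
    intro x hx
    have : ¬ f x ≤ c := hx.2
    linarith [lt_of_not_ge this]
  have hneg : ∫ x in S \ K, (f x - c) ∂μ ≤ 0 := by
    apply setIntegral_nonpos (hS.diff hK)
    intro x hx
    have : f x ≤ c := hx.1
    linarith
  have hsub : ∫ x in S, (f x - c) ∂μ ≤ ∫ x in K, (f x - c) ∂μ := by
    rw [hKsplit, hSsplit]
    linarith
  have eqK : ∫ x in K, (f x - c) ∂μ = (∫ x in K, f x ∂μ) - c * (μ K).toReal := by
    rw [integral_sub h1 hcK, setIntegral_const, smul_eq_mul, mul_comm, measureReal_def]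
  have eqS : ∫ x in S, (f x - c) ∂μ = (∫ x in S, f x ∂μ) - c * (μ S).toReal := by
    rw [integral_sub h2 hcS, setIntegral_const, smul_eq_mul, mul_comm, measureReal_def]
  rw [eqK, eqS, hmeasr] at hsub
  linarith

/-- For a convex set `K` of positive Gaussian measure and the half-space
`H_θ(K) = {⟨x,θ⟩ ≤ c}` of the same Gaussian measure, the linear moment over `K`
dominates that over `H_θ(K)`, and its square is dominated by the square of the latter. -/
theorem stmt9 (n : ℕ) (K : Set (EuclideanSpace ℝ (Fin n)))
    (hconv : Convex ℝ K) (hmeas : MeasurableSet K)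
    (hpos : 0 < stdGaussian n K)
    (θ : EuclideanSpace ℝ (Fin n)) (hθ : ‖θ‖ = 1)
    (c : ℝ)
    (hc : stdGaussian n {x : EuclideanSpace ℝ (Fin n) | (inner ℝ x θ : ℝ) ≤ c}
      = stdGaussian n K)
    (hint1 : IntegrableOn (fun x => (inner ℝ x θ : ℝ)) K (stdGaussian n))
    (hint2 : IntegrableOn (fun x => (inner ℝ x θ : ℝ))
      {x : EuclideanSpace ℝ (Fin n) | (inner ℝ x θ : ℝ) ≤ c} (stdGaussian n)) :
    (∫ x in {x : EuclideanSpace ℝ (Fin n) | (inner ℝ x θ : ℝ) ≤ c},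
        (inner ℝ x θ : ℝ) ∂(stdGaussian n))
      ≤ (∫ x in K, (inner ℝ x θ : ℝ) ∂(stdGaussian n)) ∧
    (∫ x in K, (inner ℝ x θ : ℝ) ∂(stdGaussian n)) ^ 2
      ≤ (∫ x in {x : EuclideanSpace ℝ (Fin n) | (inner ℝ x θ : ℝ) ≤ c},
          (inner ℝ x θ : ℝ) ∂(stdGaussian n)) ^ 2 := by
  haveI := stdGaussian_finite n
  set μ := stdGaussian n with hμdef
  set f : EuclideanSpace ℝ (Fin n) → ℝ := fun x => (inner ℝ x θ : ℝ) with hfdef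
  have hfcont : Continuous f := continuous_id.inner continuous_const
  have hSmeas : MeasurableSet {x | f x ≤ c} :=
    measurableSet_le hfcont.measurable measurable_const
  -- the negation map preserves μ
  have hnegvol : MeasurePreserving (fun x : EuclideanSpace ℝ (Fin n) => -x) volume volume :=
    Measure.measurePreserving_neg _
  have hnegemb : MeasurableEmbedding (fun x : EuclideanSpace ℝ (Fin n) => -x) :=
    (Homeomorph.neg (EuclideanSpace ℝ (Fin n))).measurableEmbedding
  have hnegμ : MeasurePreserving (fun x : EuclideanSpace ℝ (Fin n) => -x) μ μ := by
    constructor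
    · exact hnegemb.measurable
    · rw [hμdef, stdGaussian]
      ext s hs
      rw [hnegemb.map_apply, withDensity_apply _ (hnegemb.measurable hs),
        withDensity_apply _ hs, ← lintegral_indicator (hnegemb.measurable hs),
        ← lintegral_indicator hs,
        ← hnegvol.lintegral_comp_emb hnegemb
          (s.indicator (fun x =>
            ENNReal.ofReal ((2 * π) ^ (-(n : ℝ) / 2) * Real.exp (-‖x‖ ^ 2 / 2))))]
      congr 1
      ext x
      by_cases hx : -x ∈ s
      · rw [Set.indicator_of_mem (show x ∈ (fun x => -x) ⁻¹' s from hx),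
          Set.indicator_of_mem hx]
        simp
      · rw [Set.indicator_of_notMem (show x ∉ (fun x => -x) ⁻¹' s from hx),
          Set.indicator_of_notMem hx]
  -- first inequality
  have h1 : ∫ x in {x | f x ≤ c}, f x ∂μ ≤ ∫ x in K, f x ∂μ :=
    key_lemma μ f K hmeas hSmeas hc hint1 hint2
  -- second: apply key_lemma to -f
  have hS'eq : {x | -f x ≤ c} = (fun x : EuclideanSpace ℝ (Fin n) => -x) ⁻¹' {x | f x ≤ c} := by
    ext x
    simp [hfdef, inner_neg_left]
  have hS'meas : MeasurableSet {x | -f x ≤ c} :=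
    measurableSet_le hfcont.neg.measurable measurable_const
  have hμS' : μ {x | -f x ≤ c} = μ K := by
    rw [hS'eq, ← hnegemb.map_apply, hnegμ.map_eq, hc]
  have hintS' : IntegrableOn f {x | -f x ≤ c} μ := by
    rw [hS'eq]
    have hcomp := (hnegμ.integrableOn_comp_preimage hnegemb
      (s := {x | f x ≤ c}) (f := f)).2 hint2
    have heq : (f ∘ fun x : EuclideanSpace ℝ (Fin n) => -x) = fun x => -f x :=
      funext fun x => by simp [hfdef, inner_neg_left]
    rw [heq] at hcomp
    have h5 : IntegrableOn (fun x => -(-f x))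
        ((fun x : EuclideanSpace ℝ (Fin n) => -x) ⁻¹' {x | f x ≤ c}) μ := hcomp.neg
    simp only [neg_neg] at h5
    exact h5
  have h2 : ∫ x in {x | -f x ≤ c}, -f x ∂μ ≤ ∫ x in K, -f x ∂μ :=
    key_lemma μ (fun x => -f x) K hmeas hS'meas hμS' hint1.neg hintS'.neg
  have hS'int : ∫ x in {x | -f x ≤ c}, f x ∂μ = -∫ x in {x | f x ≤ c}, f x ∂μ := by
    rw [hS'eq]
    have := hnegμ.setIntegral_preimage_emb hnegemb f {x | f x ≤ c}
    have h3 : ∫ x in (fun x : EuclideanSpace ℝ (Fin n) => -x) ⁻¹' {x | f x ≤ c},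
        f (-x) ∂μ = ∫ x in {x | f x ≤ c}, f x ∂μ := this
    have h4 : ∀ x : EuclideanSpace ℝ (Fin n), f (-x) = -f x := by
      intro x; simp [hfdef, inner_neg_left]
    rw [← h3]
    simp_rw [h4]
    rw [integral_neg, neg_neg]
  rw [integral_neg, integral_neg, neg_le_neg_iff, hS'int] at h2
  refine ⟨h1, ?_⟩
  have := sq_le_sq' (by linarith : -(-(∫ x in {x | f x ≤ c}, f x ∂μ)) ≤ ∫ x in K, f x ∂μ) h2
  simpa using this
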